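/- Assume additionally that A·M ⊇ M·A for every A ∈ Δ. For A, B ∈ Δ, the map Γ C Γ ↦ Γ̃ (C,0) Γ̃ induces a bijection from Γ\ΓAΓBΓ/Γ onto Γ̃\Γ̃(A,0)Γ̃(B,0)Γ̃/Γ̃, with inverse induced by the projection (C,c) ↦ C. -/
import Mathlib

def tmul {G M : Type*} [Group G] [AddCommGroup M] (l r : G → M →+ M)
    (x y : G × M) : G × M :=
  (x.1 * y.1, l x.1 y.2 + r y.1 x.2)

def tdcoset {G M : Type*} [Group G] [AddCommGroup M] (l r : G → M →+ M)
    (Γ : Set G) (x : G × M) : Set (G × M) :=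
  {z | ∃ g h : G × M, g.1 ∈ Γ ∧ h.1 ∈ Γ ∧ z = tmul l r (tmul l r g x) h}

def dcosetG {G : Type*} [Group G] (Γ : Set G) (x : G) : Set G :=
  {z | ∃ g ∈ Γ, ∃ h ∈ Γ, z = g * x * h}

section Aux
variable {G M : Type*} [Group G] [AddCommGroup M] (l r : G → M →+ M)
  (hl1 : l 1 = AddMonoidHom.id M)
  (hlm : ∀ g h : G, l (g * h) = (l g).comp (l h))
  (hr1 : r 1 = AddMonoidHom.id M)
  (hrm : ∀ g h : G, r (g * h) = (r h).comp (r g))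
  (hcomm : ∀ (g h : G) (m : M), l g (r h m) = r h (l g m))

include hlm hrm hcomm in
lemma tmul_assoc (a b c : G × M) :
    tmul l r (tmul l r a b) c = tmul l r a (tmul l r b c) := by
  refine Prod.ext (mul_assoc _ _ _) ?_
  simp only [tmul, hlm, hrm, AddMonoidHom.comp_apply, map_add, hcomm]
  abel

include hlm hrm hcomm in
lemma tdcoset_subset (Γ : Subgroup G) {x y u v : G × M}
    (hu : u.1 ∈ Γ) (hv : v.1 ∈ Γ)
    (hxy : x = tmul l r (tmul l r u y) v) :
    tdcoset l r (Γ : Set G) x ⊆ tdcoset l r (Γ : Set G) y := by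
  rintro z ⟨g, h, hg, hh, rfl⟩
  refine ⟨tmul l r g u, tmul l r v h, mul_mem hg hu, mul_mem hv hh, ?_⟩
  simp only [hxy, tmul_assoc l r hlm hrm hcomm]

include hl1 hlm hr1 hrm hcomm in
lemma tdcoset_shift (Γ : Subgroup G) (C : G) (c a b : M) :
    tdcoset l r (Γ : Set G) (C, c + l C b + r C a) = tdcoset l r (Γ : Set G) (C, c) := by
  apply Set.Subset.antisymm
  · refine tdcoset_subset l r hlm hrm hcomm Γ (u := ((1:G), a)) (v := ((1:G), b))
      Γ.one_mem Γ.one_mem ?_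
    simp only [tmul, hl1, hr1, AddMonoidHom.id_apply, one_mul, mul_one, Prod.mk.injEq,
      true_and]
    abel
  · refine tdcoset_subset l r hlm hrm hcomm Γ (u := ((1:G), -a)) (v := ((1:G), -b))
      Γ.one_mem Γ.one_mem ?_
    simp only [tmul, hl1, hr1, AddMonoidHom.id_apply, one_mul, mul_one, Prod.mk.injEq,
      true_and, map_neg]
    abel

lemma fst_image_tdcoset (Γ : Set G) (x : G × M) :
    Prod.fst '' tdcoset l r Γ x = dcosetG Γ x.1 := by
  ext z
  constructor
  · rintro ⟨w, ⟨g, h, hg, hh, rfl⟩, rfl⟩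
    exact ⟨g.1, hg, h.1, hh, rfl⟩
  · rintro ⟨g, hg, h, hh, rfl⟩
    exact ⟨tmul l r (tmul l r (g, 0) x) (h, 0), ⟨(g,0), (h,0), hg, hh, rfl⟩, rfl⟩

include hl1 hlm hr1 hrm hcomm in
lemma tdcoset_zero_eq (Γ : Subgroup G) {x1 y1 g h : G}
    (hg : g ∈ Γ) (hh : h ∈ Γ) (hxy : x1 = g * y1 * h) :
    tdcoset l r (Γ : Set G) ((x1, (0:M))) = tdcoset l r (Γ : Set G) ((y1, (0:M))) := by
  apply Set.Subset.antisymm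
  · refine tdcoset_subset l r hlm hrm hcomm Γ (u := (g, (0:M))) (v := (h, (0:M))) hg hh ?_
    simp [tmul, hxy]
  · refine tdcoset_subset l r hlm hrm hcomm Γ (u := (g⁻¹, (0:M))) (v := (h⁻¹, (0:M)))
      (inv_mem hg) (inv_mem hh) ?_
    simp [tmul, hxy]
    group

end Aux

theorem dcoset_product_bijection {G M : Type*} [Group G] [AddCommGroup M]
    (l r : G → M →+ M)
    (hl1 : l 1 = AddMonoidHom.id M)
    (hlm : ∀ g h : G, l (g * h) = (l g).comp (l h))
    (hr1 : r 1 = AddMonoidHom.id M)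
    (hrm : ∀ g h : G, r (g * h) = (r h).comp (r g))
    (hcomm : ∀ (g h : G) (m : M), l g (r h m) = r h (l g m))
    (Γ : Subgroup G) (Δ : Submonoid G) (hΓΔ : (Γ : Set G) ⊆ (Δ : Set G))
    -- `AM ⊇ MA` for every `A ∈ Δ`:
    (hAMMA : ∀ C ∈ Δ, ∀ m : M, ∃ m' : M, r C m = l C m')
    (A B : G) (hA : A ∈ Δ) (hB : B ∈ Δ) :
    -- `ΓAΓBΓ` and `Γ̃(A,0)Γ̃(B,0)Γ̃`
    let P : Set G := {z | ∃ g ∈ (Γ : Set G), ∃ h ∈ (Γ : Set G), ∃ k ∈ (Γ : Set G),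
      z = g * A * h * B * k}
    let Pt : Set (G × M) := {z | ∃ g h k : G × M, g.1 ∈ (Γ : Set G) ∧
      h.1 ∈ (Γ : Set G) ∧ k.1 ∈ (Γ : Set G) ∧
      z = tmul l r (tmul l r (tmul l r (tmul l r g (A, (0 : M))) h) (B, (0 : M))) k}
    -- the sets of double cosets `Γ\ΓAΓBΓ/Γ` and `Γ̃\Γ̃(A,0)Γ̃(B,0)Γ̃/Γ̃`
    let X : Set (Set G) := {S | ∃ C ∈ P, S = dcosetG (Γ : Set G) C}
    let Xt : Set (Set (G × M)) := {S | ∃ x ∈ Pt, S = tdcoset l r (Γ : Set G) x}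
    -- the projection induces a bijection, inverse to `ΓCΓ ↦ Γ̃(C,0)Γ̃`:
    Set.BijOn (fun S : Set (G × M) => Prod.fst '' S) Xt X ∧
    (∀ C ∈ P, Prod.fst '' (tdcoset l r (Γ : Set G) (C, (0 : M))) = dcosetG (Γ : Set G) C) ∧
    (∀ x ∈ Pt, tdcoset l r (Γ : Set G) (x.1, (0 : M)) = tdcoset l r (Γ : Set G) x) := by
  intro P Pt X Xt
  have hlmul : ∀ (g h : G) (m : M), l (g*h) m = l g (l h m) := fun g h m => by rw [hlm]; rfl
  have hrmul : ∀ (g h : G) (m : M), r (g*h) m = r h (r g m) := fun g h m => by rw [hrm]; rfl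
  have hl1' : ∀ m : M, l 1 m = m := fun m => by rw [hl1]; rfl
  have hr1' : ∀ m : M, r 1 m = m := fun m => by rw [hr1]; rfl
  have hlinv : ∀ (g : G) (m : M), l g (l g⁻¹ m) = m := fun g m => by
    rw [← hlmul, mul_inv_cancel, hl1']
  have hrinv : ∀ (g : G) (m : M), r g (r g⁻¹ m) = m := fun g m => by
    rw [← hrmul, inv_mul_cancel, hr1']
  -- statement 3
  have h3 : ∀ x ∈ Pt, tdcoset l r (Γ : Set G) (x.1, (0 : M)) = tdcoset l r (Γ : Set G) x := by
    rintro x ⟨g, h, k, hg, hh, hk, rfl⟩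
    obtain ⟨m1, hm1⟩ := hAMMA (h.1 * B * k.1)
      (mul_mem (mul_mem (hΓΔ hh) hB) (hΓΔ hk)) (r h.1⁻¹ h.2)
    have hm1' : r k.1 (r B h.2) = l h.1 (l B (l k.1 m1)) := by
      rw [hrmul, hrmul, hrinv, hlmul, hlmul] at hm1
      exact hm1
    set C : G := g.1 * A * h.1 * B * k.1 with hC
    have hx : tmul l r (tmul l r (tmul l r (tmul l r g (A, (0 : M))) h) (B, (0 : M))) k
        = (C, (0:M) + l C (l k.1⁻¹ k.2 + m1) + r C (r g.1⁻¹ g.2)) := by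
      refine Prod.ext rfl ?_
      simp only [tmul, map_zero, zero_add, add_zero, map_add, hC, hlmul, hrmul, hcomm,
        hlinv, hrinv]
      rw [← hm1']
      simp only [hcomm]
      abel
    rw [hx]
    exact (tdcoset_shift l r hl1 hlm hr1 hrm hcomm Γ C 0 _ _).symm
  -- statement 2
  have h2 : ∀ C ∈ P, Prod.fst '' (tdcoset l r (Γ : Set G) (C, (0 : M)))
      = dcosetG (Γ : Set G) C := fun C _ => fst_image_tdcoset l r (Γ : Set G) (C, 0)
  -- membership transfers
  have hPtP : ∀ x ∈ Pt, x.1 ∈ P := by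
    rintro x ⟨g, h, k, hg, hh, hk, rfl⟩
    exact ⟨g.1, hg, h.1, hh, k.1, hk, rfl⟩
  have hPPt : ∀ C ∈ P, ((C, (0:M)) : G × M) ∈ Pt := by
    rintro C ⟨g, hg, h, hh, k, hk, rfl⟩
    refine ⟨(g, 0), (h, 0), (k, 0), hg, hh, hk, ?_⟩
    simp [tmul]
  refine ⟨⟨?_, ?_, ?_⟩, h2, h3⟩
  · -- MapsTo
    rintro S ⟨x, hx, rfl⟩
    refine ⟨x.1, hPtP x hx, ?_⟩
    show Prod.fst '' tdcoset l r (Γ : Set G) x = dcosetG (Γ : Set G) x.1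
    exact fst_image_tdcoset l r (Γ : Set G) x
  · -- InjOn
    rintro S ⟨x, hx, rfl⟩ T ⟨y, hy, rfl⟩ hST
    simp only [fst_image_tdcoset l r (Γ : Set G)] at hST
    have hxy : x.1 ∈ dcosetG (Γ : Set G) y.1 := by
      rw [← hST]
      exact ⟨1, Γ.one_mem, 1, Γ.one_mem, by group⟩
    obtain ⟨g, hg, h, hh, hxgh⟩ := hxy
    rw [← h3 x hx, ← h3 y hy]
    exact tdcoset_zero_eq l r hl1 hlm hr1 hrm hcomm Γ hg hh hxgh
  · -- SurjOn
    rintro S ⟨C, hC, rfl⟩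
    exact ⟨tdcoset l r (Γ : Set G) (C, (0:M)), ⟨(C, 0), hPPt C hC, rfl⟩, h2 C hC⟩
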